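/- Let A ∈ ℝ^{n×n}, B ∈ ℝ^{n×m}, and let Q be a symmetric n×n real matrix. If Π₁ and Π₂ are symmetric n×n real matrices, each solving the algebraic Riccati equation AᵀΠ + ΠA − ΠBBᵀΠ + Q = 0, and both A − BBᵀΠ₁ and A − BBᵀΠ₂ are Hurwitz, then Π₁ = Π₂; i.e., the algebraic Riccati equation has at most one stabilizing symmetric solution. -/

import Mathlib

open Matrix
open Polynomial


lemma eval_charpoly' {k : ℕ} (M : Matrix (Fin k) (Fin k) ℂ) (r : ℂ) :
    M.charpoly.eval r = (Matrix.scalar (Fin k) r - M).det := by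
  rw [Matrix.charpoly, eval_det, matPolyEquiv_charmatrix]
  simp

lemma mem_spectrum_iff_det' {k : ℕ} (M : Matrix (Fin k) (Fin k) ℂ) (a : ℂ) :
    a ∈ spectrum ℂ M ↔ (Matrix.scalar (Fin k) a - M).det = 0 := by
  rw [spectrum.mem_iff, Matrix.isUnit_iff_isUnit_det, isUnit_iff_ne_zero, not_not]
  have : (algebraMap ℂ (Matrix (Fin k) (Fin k) ℂ)) a = Matrix.scalar (Fin k) a := by
    rw [Matrix.algebraMap_eq_diagonal, Matrix.scalar_apply]; rfl
  rw [this]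

lemma aeval_mul_of_mul_eq {k : ℕ} {G H D : Matrix (Fin k) (Fin k) ℂ}
    (h : G * D = D * H) (p : ℂ[X]) :
    (aeval G p) * D = D * (aeval H p) := by
  have hpow : ∀ j : ℕ, G ^ j * D = D * H ^ j := by
    intro j; induction j with
    | zero => simp
    | succ j ih => rw [pow_succ, pow_succ, mul_assoc, h, ← mul_assoc, ih, mul_assoc]
  rw [aeval_eq_sum_range, aeval_eq_sum_range, Finset.sum_mul, Finset.mul_sum]
  exact Finset.sum_congr rfl fun i _ => by rw [smul_mul_assoc, mul_smul_comm, hpow]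

lemma toList_map_prod {α M : Type*} [CommMonoid M] (s : Multiset α) (f : α → M) :
    (s.toList.map f).prod = (s.map f).prod := by
  conv_rhs => rw [← Multiset.coe_toList s]
  rw [Multiset.map_coe, Multiset.prod_coe]

/-- The controllability matrix `[B, AB, A²B, …, A^{n−1}B]` (columns indexed by `Fin n × Fin m`). -/
def ctrbMatrix {n m : ℕ} (A : Matrix (Fin n) (Fin n) ℝ) (B : Matrix (Fin n) (Fin m) ℝ) :
    Matrix (Fin n) (Fin n × Fin m) ℝ :=
  Matrix.of fun i p => ((A ^ (p.1 : ℕ)) * B) i p.2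

/-- `(A,B)` is a controllable pair iff the controllability matrix has rank `n`. -/
def IsControllablePair {n m : ℕ} (A : Matrix (Fin n) (Fin n) ℝ)
    (B : Matrix (Fin n) (Fin m) ℝ) : Prop :=
  (ctrbMatrix A B).rank = n

/-- A real square matrix is Hurwitz iff all its (complex) eigenvalues have negative real part. -/
def IsHurwitz {n : ℕ} (F : Matrix (Fin n) (Fin n) ℝ) : Prop :=
  ∀ μ ∈ spectrum ℂ (F.map (algebraMap ℝ ℂ)), μ.re < 0

/-- the algebraic Riccati equation `AᵀΠ + ΠA − ΠBBᵀΠ + Q = 0`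
has at most one stabilizing symmetric solution. -/
theorem stmt13 {n m : ℕ} (A : Matrix (Fin n) (Fin n) ℝ) (B : Matrix (Fin n) (Fin m) ℝ)
    (Q : Matrix (Fin n) (Fin n) ℝ) (hQ : Q.IsSymm)
    (P₁ P₂ : Matrix (Fin n) (Fin n) ℝ) (hP₁ : P₁.IsSymm) (hP₂ : P₂.IsSymm)
    (hARE₁ : Aᵀ * P₁ + P₁ * A - P₁ * (B * Bᵀ) * P₁ + Q = 0)
    (hARE₂ : Aᵀ * P₂ + P₂ * A - P₂ * (B * Bᵀ) * P₂ + Q = 0)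
    (hHur₁ : IsHurwitz (A - B * Bᵀ * P₁)) (hHur₂ : IsHurwitz (A - B * Bᵀ * P₂)) :
    P₁ = P₂ := by
  have e1 : Aᵀ * P₁ + P₁ * A - P₁ * (B * Bᵀ) * P₁ = -Q := eq_neg_of_add_eq_zero_left hARE₁
  have e2 : Aᵀ * P₂ + P₂ * A - P₂ * (B * Bᵀ) * P₂ = -Q := eq_neg_of_add_eq_zero_left hARE₂
  have ht : (A - B * Bᵀ * P₁)ᵀ = Aᵀ - P₁ * (B * Bᵀ) := by
    rw [Matrix.transpose_sub, Matrix.transpose_mul, Matrix.transpose_mul, hP₁.eq,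
      Matrix.transpose_transpose]
  have key : (A - B * Bᵀ * P₁)ᵀ * (P₁ - P₂) + (P₁ - P₂) * (A - B * Bᵀ * P₂) = 0 := by
    rw [ht]
    calc (Aᵀ - P₁ * (B * Bᵀ)) * (P₁ - P₂) + (P₁ - P₂) * (A - B * Bᵀ * P₂)
        = (Aᵀ * P₁ + P₁ * A - P₁ * (B * Bᵀ) * P₁)
          - (Aᵀ * P₂ + P₂ * A - P₂ * (B * Bᵀ) * P₂) := by noncomm_ring
      _ = 0 := by rw [e1, e2, sub_self]
  -- complexify
  let φ : Matrix (Fin n) (Fin n) ℝ →+* Matrix (Fin n) (Fin n) ℂ :=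
    (algebraMap ℝ ℂ).mapMatrix
  have hφ : ∀ M : Matrix (Fin n) (Fin n) ℝ, φ M = M.map (algebraMap ℝ ℂ) := fun M => rfl
  set G : Matrix (Fin n) (Fin n) ℂ := φ ((A - B * Bᵀ * P₁)ᵀ) with hG
  set H : Matrix (Fin n) (Fin n) ℂ := φ (A - B * Bᵀ * P₂) with hH
  set D : Matrix (Fin n) (Fin n) ℂ := φ (P₁ - P₂) with hD
  have keyC : G * D = D * (-H) := by
    have h0 : G * D + D * H = 0 := by
      have := congrArg φ key
      simpa only [_root_.map_add, _root_.map_mul, _root_.map_zero] using this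
    rw [mul_neg]
    exact eq_neg_of_add_eq_zero_left h0
  have h0 : D * aeval (-H) G.charpoly = 0 := by
    have h := aeval_mul_of_mul_eq keyC G.charpoly
    rw [Matrix.aeval_self_charpoly, zero_mul] at h
    exact h.symm
  have hunit : IsUnit (aeval (-H) G.charpoly) := by
    rw [Matrix.isUnit_iff_isUnit_det, isUnit_iff_ne_zero]
    have hsplit : G.charpoly.Splits := IsAlgClosed.splits _
    have hfact : G.charpoly = ((G.charpoly.roots.toList).map (fun a => X - C a)).prod :=
      (hsplit.eq_prod_roots_of_monic G.charpoly_monic).trans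
        (toList_map_prod _ _).symm
    have hdet : ∀ (L' : List (Matrix (Fin n) (Fin n) ℂ)),
        L'.prod.det = (L'.map Matrix.det).prod := fun L' => by
      simpa using map_list_prod (Matrix.detMonoidHom) L'
    rw [hfact, map_list_prod, List.map_map, hdet, List.map_map]
    apply List.prod_ne_zero
    rw [List.mem_map]
    rintro ⟨a, ha', hc⟩
    simp only [Function.comp_apply] at hc
    have ha : a ∈ G.charpoly.roots := Multiset.mem_toList.mp ha'
    have hroot : G.charpoly.eval a = 0 := Polynomial.isRoot_of_mem_roots ha
    rw [eval_charpoly'] at hroot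
    have hre : a.re < 0 := by
      apply hHur₁
      rw [← hφ, mem_spectrum_iff_det']
      have hGT : φ ((A - B * Bᵀ * P₁)) = Gᵀ := by
        rw [hG, hφ, hφ, Matrix.transpose_map, Matrix.transpose_transpose]
      rw [hGT, ← Matrix.det_transpose, Matrix.transpose_sub, Matrix.transpose_transpose]
      rw [show ((Matrix.scalar (Fin n)) a)ᵀ = (Matrix.scalar (Fin n)) a from by
        rw [Matrix.scalar_apply, Matrix.diagonal_transpose]]
      exact hroot
    have hre2 : (-a).re < 0 := by
      apply hHur₂
      rw [← hφ, ← hH, mem_spectrum_iff_det']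
      rw [← hc]
      congr 1
      rw [map_sub, Polynomial.aeval_X, Polynomial.aeval_C]
      rw [show (algebraMap ℂ (Matrix (Fin n) (Fin n) ℂ)) a = Matrix.scalar (Fin n) a from by
        rw [Matrix.algebraMap_eq_diagonal, Matrix.scalar_apply]; rfl]
      rw [show (Matrix.scalar (Fin n)) (-a) = -((Matrix.scalar (Fin n)) a) from by
        simp [Matrix.scalar_apply]]
      abel
    simp only [Complex.neg_re] at hre2
    linarith
  have hD0 : D = 0 := by
    obtain ⟨u, hu⟩ := hunit
    calc D = D * ↑u * ↑u⁻¹ := by rw [mul_assoc, u.mul_inv, mul_one]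
      _ = 0 := by rw [hu, h0, zero_mul]
  ext i j
  have h2 : ((P₁ i j : ℝ) : ℂ) - ((P₂ i j : ℝ) : ℂ) = 0 := by
    simpa [hD, hφ, Matrix.map_apply, Matrix.sub_apply] using congrFun (congrFun hD0 i) j
  exact_mod_cast sub_eq_zero.mp h2
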